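/- Let d ≥ 2, p ∈ (2d/(d+1), 3d/(d+1)), r = p*/p', and let C_S > 0 be any constant such that the Sobolev inequality ‖u‖_{L^{p*}(ℝ^d)} ≤ C_S ‖∇u‖_{L^p(ℝ^d)} holds for all u ∈ W^{1,p}(ℝ^d). Then for every q ∈ [1, r] and every nonnegative ρ ∈ L^1(ℝ^d) with ρ^{1/p'} ∈ W^{1,p}(ℝ^d), one has ‖ρ‖_{L^q} ≤ ((p')^{−1} C_S)^{r'p'/q'} ‖ρ‖_{L^1}^{1 − r'/q'} I_p(ρ)^{r'p'/(q'p)}, where q' and r' denote the Hölder conjugates of q and r. -/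

import Mathlib

open MeasureTheory Real Set
open scoped ENNReal NNReal

noncomputable section

abbrev Ed (d : ℕ) := EuclideanSpace ℝ (Fin d)

def jap {d : ℕ} (x : Ed d) : ℝ := Real.sqrt (1 + ‖x‖ ^ 2)

def LqNorm {d : ℕ} (q : ℝ) (f : Ed d → ℝ) : ℝ := (∫ x : Ed d, |f x| ^ q) ^ (1 / q)

def pconj (p : ℝ) : ℝ := p / (p - 1)

def pstar (d : ℕ) (p : ℝ) : ℝ := d * p / (d - p)

def alphaP (d : ℕ) (p : ℝ) : ℝ := p * (d + 1) - 2 * d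

def MemW1p {d : ℕ} (p : ℝ) (u : Ed d → ℝ) : Prop :=
  Differentiable ℝ u ∧ MemLp u (ENNReal.ofReal p) volume ∧
    MemLp (fun x => ‖gradient u x‖) (ENNReal.ofReal p) volume

def fisherInfo {d : ℕ} (p : ℝ) (ρ : Ed d → ℝ) : ℝ :=
  pconj p ^ p * ∫ x : Ed d, ‖gradient (fun y => ρ y ^ ((p - 1) / p)) x‖ ^ p

def Kker (d : ℕ) (α : ℝ) (x : Ed d) : Ed d := ‖x‖ ^ (-α) • x



open Filter
open scoped Topology

section Aux

lemma abs_arctan_le (t : ℝ) : |arctan t| ≤ |t| := by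
  have h := convex_univ.norm_image_sub_le_of_norm_deriv_le (f := arctan) (s := Set.univ)
    (fun x _ => Real.differentiableAt_arctan x)
    (fun x _ => by
      rw [Real.deriv_arctan]
      rw [Real.norm_eq_abs, abs_of_pos (by positivity)]
      rw [div_le_one (by positivity)]
      nlinarith [sq_nonneg x])
    (Set.mem_univ (0:ℝ)) (Set.mem_univ t)
  simpa [Real.arctan_zero] using h

lemma trunc_tendsto (t : ℝ) (ht : 0 ≤ t) :
    Tendsto (fun n : ℕ => ((n : ℝ) + 1) * arctan (t / ((n : ℝ) + 1))) atTop (𝓝 t) := by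
  rcases eq_or_lt_of_le ht with h0 | hpos
  · simp [← h0]
  · have hslope : Tendsto (fun s : ℝ => arctan s / s) (𝓝[≠] 0) (𝓝 1) := by
      have h2 := hasDerivAt_iff_tendsto_slope.mp (Real.hasDerivAt_arctan 0)
      have : (fun s : ℝ => arctan s / s) = slope arctan 0 := by
        funext s; simp [slope_def_field, div_eq_inv_mul]
      rw [this]
      simpa using h2
    have htend : Tendsto (fun n : ℕ => t / ((n : ℝ) + 1)) atTop (𝓝[≠] 0) := by
      apply tendsto_nhdsWithin_of_tendsto_nhds_of_eventually_within
      · exact tendsto_const_nhds.div_atTop (tendsto_natCast_atTop_atTop.atTop_add tendsto_const_nhds)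
      · exact Eventually.of_forall fun n => by
          simp only [Set.mem_compl_iff, Set.mem_singleton_iff]
          positivity
    have := (hslope.comp htend).const_mul t
    simp only [Function.comp] at this
    have heq : ∀ n : ℕ, t * (arctan (t / ((n:ℝ)+1)) / (t / ((n:ℝ)+1))) =
        ((n : ℝ) + 1) * arctan (t / ((n : ℝ) + 1)) := by
      intro n
      have hn : ((n:ℝ)+1) ≠ 0 := by positivity
      field_simp
    rw [tendsto_congr heq] at this
    rwa [mul_one] at this


variable {F : Type*} [NormedAddCommGroup F] [InnerProductSpace ℝ F] [CompleteSpace F]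

lemma norm_gradient_eq (f : F → ℝ) (x : F) : ‖gradient f x‖ = ‖fderiv ℝ f x‖ := by
  unfold gradient
  exact LinearIsometryEquiv.norm_map _ _

lemma trunc_hasFDerivAt (u : F → ℝ) (hu : Differentiable ℝ u) (c : ℝ) (hc : c ≠ 0) (x : F) :
    HasFDerivAt (fun y => c * arctan (u y / c))
      ((1 + (u x / c) ^ 2)⁻¹ • fderiv ℝ u x) x := by
  have h1 : HasFDerivAt (fun y => u y / c) (c⁻¹ • fderiv ℝ u x) x := by
    simpa [div_eq_inv_mul] using ((hu x).hasFDerivAt).const_mul c⁻¹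
  have h2 := h1.arctan
  have h3 := h2.const_mul c
  refine h3.congr_fderiv ?_
  rw [smul_smul, smul_smul]
  congr 1
  field_simp

lemma gradient_trunc (u : F → ℝ) (hu : Differentiable ℝ u) (c : ℝ) (hc : c ≠ 0) (x : F) :
    gradient (fun y => c * arctan (u y / c)) x
      = (1 + (u x / c) ^ 2)⁻¹ • gradient u x := by
  unfold gradient
  rw [(trunc_hasFDerivAt u hu c hc x).fderiv, LinearIsometryEquiv.map_smul]


lemma LqNorm_nonneg {d : ℕ} (q : ℝ) (f : Ed d → ℝ) : 0 ≤ LqNorm q f :=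
  Real.rpow_nonneg (integral_nonneg fun x => Real.rpow_nonneg (abs_nonneg _) q) _

/-- pointwise bound: for `0 ≤ a`, `a ≤ M`, `a ≤ b`, `0 < P - p` exponents -/
lemma rpow_split_bound {a b M p P : ℝ} (ha : 0 ≤ a) (haM : a ≤ M) (hab : a ≤ b)
    (hp : 0 ≤ p) (hpP : p ≤ P) (hP : 0 < P) : a ^ P ≤ M ^ (P - p) * b ^ p := by
  rcases eq_or_lt_of_le ha with h0 | hpos
  · rw [← h0, Real.zero_rpow hP.ne']
    exact mul_nonneg (Real.rpow_nonneg (le_trans ha haM) _)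
      (Real.rpow_nonneg (le_trans ha hab) _)
  · have : a ^ P = a ^ (P - p) * a ^ p := by
      rw [← Real.rpow_add hpos]; ring_nf
    rw [this]
    exact mul_le_mul (Real.rpow_le_rpow ha haM (by linarith))
      (Real.rpow_le_rpow ha hab hp) (Real.rpow_nonneg ha p)
      (Real.rpow_nonneg (le_trans ha haM) _)

set_option maxHeartbeats 1000000 in
lemma sobolev_B {d : ℕ} {p CS : ℝ} (hp1 : 1 < p) (hps : 0 < pstar d p)
    (hpps : p ≤ pstar d p) (hCS : 0 < CS)
    (hSob : ∀ v : Ed d → ℝ, MemW1p p v →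
      LqNorm (pstar d p) v ≤ CS * LqNorm p fun x => ‖gradient v x‖)
    (u : Ed d → ℝ) (hu0 : ∀ x, 0 ≤ u x) (hW : MemW1p p u) :
    ∫⁻ x : Ed d, ENNReal.ofReal (u x ^ pstar d p) ≤
      ENNReal.ofReal ((CS * LqNorm p fun x => ‖gradient u x‖) ^ pstar d p) := by
  obtain ⟨hud, hup, hgp⟩ := hW
  have hp0 : (0:ℝ) < p := lt_trans one_pos hp1
  set G : ℝ := LqNorm p fun x => ‖gradient u x‖ with hGdef
  have hG0 : 0 ≤ G := LqNorm_nonneg _ _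
  have hucont : Continuous u := hud.continuous
  -- integrability of |u|^p and ‖grad u‖^p
  have hup_int : Integrable (fun x : Ed d => |u x| ^ p) := by
    have := hup.integrable_norm_rpow (ENNReal.ofReal_pos.mpr hp0).ne' ENNReal.ofReal_ne_top
    simpa [Real.norm_eq_abs, ENNReal.toReal_ofReal hp0.le] using this
  have hgp_int : Integrable (fun x : Ed d => |‖gradient u x‖| ^ p) := by
    have := hgp.integrable_norm_rpow (ENNReal.ofReal_pos.mpr hp0).ne' ENNReal.ofReal_ne_top
    simpa [Real.norm_eq_abs, ENNReal.toReal_ofReal hp0.le] using this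
  -- the truncations
  set w : ℕ → Ed d → ℝ := fun n x => ((n:ℝ)+1) * arctan (u x / ((n:ℝ)+1)) with hwdef
  have key : ∀ n : ℕ, ∫⁻ x : Ed d, ENNReal.ofReal (|w n x| ^ pstar d p) ≤
      ENNReal.ofReal ((CS * G) ^ pstar d p) := by
    intro n
    set c : ℝ := (n:ℝ)+1 with hcdef
    have hc : (0:ℝ) < c := by positivity
    have hwd : Differentiable ℝ (w n) := fun x =>
      (trunc_hasFDerivAt u hud c hc.ne' x).differentiableAt
    have hwcont : Continuous (w n) := hwd.continuous
    have hw_abs : ∀ x, |w n x| ≤ |u x| := by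
      intro x
      calc |w n x| = c * |arctan (u x / c)| := by
            rw [hwdef]; rw [abs_mul, abs_of_pos hc]
        _ ≤ c * |u x / c| := by
            exact mul_le_mul_of_nonneg_left (abs_arctan_le _) hc.le
        _ = |u x| := by rw [abs_div, abs_of_pos hc]; field_simp
    have hw_bdd : ∀ x, |w n x| ≤ c * (π/2) := by
      intro x
      calc |w n x| = c * |arctan (u x / c)| := by
            rw [hwdef]; rw [abs_mul, abs_of_pos hc]
        _ ≤ c * (π/2) := by
            apply mul_le_mul_of_nonneg_left _ hc.le
            rw [abs_le]
            exact ⟨le_of_lt (Real.neg_pi_div_two_lt_arctan _),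
              le_of_lt (Real.arctan_lt_pi_div_two _)⟩
    have hgrad_eq : ∀ x, ‖gradient (w n) x‖
        = (1 + (u x / c) ^ 2)⁻¹ * ‖gradient u x‖ := by
      intro x
      rw [hwdef]
      rw [gradient_trunc u hud c hc.ne' x, norm_smul, Real.norm_eq_abs,
        abs_of_pos (by positivity)]
    have hfac : ∀ x, (1 + (u x / c) ^ 2)⁻¹ ≤ (1:ℝ) := by
      intro x
      rw [inv_le_one_iff₀]
      right; nlinarith [sq_nonneg (u x / c)]
    have hgrad_le : ∀ x, ‖gradient (w n) x‖ ≤ ‖gradient u x‖ := by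
      intro x
      rw [hgrad_eq x]
      exact mul_le_mul_of_nonneg_right (hfac x) (norm_nonneg _) |>.trans_eq (one_mul _)
    have hgradmeas : AEStronglyMeasurable (fun x => ‖gradient (w n) x‖) volume := by
      have : (fun x => ‖gradient (w n) x‖)
          = fun x => (1 + (u x / c) ^ 2)⁻¹ * ‖gradient u x‖ := funext hgrad_eq
      rw [this]
      refine (Continuous.aestronglyMeasurable ?_).mul hgp.aestronglyMeasurable
      exact (continuous_const.add ((hucont.div_const c).pow 2)).inv₀ fun x => (by positivity : (0:ℝ) < 1 + (u x / c) ^ 2).ne'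
    have hmemw : MemW1p p (w n) := by
      refine ⟨hwd, hup.mono hwcont.aestronglyMeasurable ?_, hgp.mono hgradmeas ?_⟩
      · exact Eventually.of_forall fun x => by
          simpa [Real.norm_eq_abs] using hw_abs x
      · exact Eventually.of_forall fun x => by
          simpa [Real.norm_eq_abs, abs_norm] using hgrad_le x
    have hsob := hSob (w n) hmemw
    have hsob2 : LqNorm (pstar d p) (w n) ≤ CS * G := by
      refine le_trans hsob (mul_le_mul_of_nonneg_left ?_ hCS.le)
      unfold LqNorm
      apply Real.rpow_le_rpow (integral_nonneg fun x => Real.rpow_nonneg (abs_nonneg _) _)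
      · apply integral_mono_of_nonneg
          (Eventually.of_forall fun x => Real.rpow_nonneg (abs_nonneg _) _)
          (by simpa [abs_norm] using hgp_int)
        exact Eventually.of_forall fun x => by
          simp only [abs_norm]
          exact Real.rpow_le_rpow (norm_nonneg _) (hgrad_le x) hp0.le
      · positivity
    -- integrability of |w n|^{p*}
    have hwint : Integrable (fun x : Ed d => |w n x| ^ pstar d p) := by
      apply Integrable.mono' ((hup_int.const_mul ((c * (π/2)) ^ (pstar d p - p))))
      · exact Continuous.aestronglyMeasurable <|
          (hwcont.abs).rpow_const fun x => Or.inr hps.le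
      · exact Eventually.of_forall fun x => by
          rw [Real.norm_eq_abs, abs_of_nonneg (Real.rpow_nonneg (abs_nonneg _) _)]
          exact rpow_split_bound (abs_nonneg _) (hw_bdd x) (hw_abs x) hp0.le hpps hps
    have hconv : ∫⁻ x : Ed d, ENNReal.ofReal (|w n x| ^ pstar d p)
        = ENNReal.ofReal (∫ x : Ed d, |w n x| ^ pstar d p) := by
      rw [MeasureTheory.ofReal_integral_eq_lintegral_ofReal hwint
        (Eventually.of_forall fun x => Real.rpow_nonneg (abs_nonneg _) _)]
    rw [hconv]
    apply ENNReal.ofReal_le_ofReal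
    have : ∫ x : Ed d, |w n x| ^ pstar d p = (LqNorm (pstar d p) (w n)) ^ pstar d p := by
      unfold LqNorm
      rw [one_div, Real.rpow_inv_rpow (integral_nonneg fun x =>
        Real.rpow_nonneg (abs_nonneg _) _) hps.ne']
    rw [this]
    exact Real.rpow_le_rpow (LqNorm_nonneg _ _) hsob2 hps.le
  -- Fatou
  have hptwise : ∀ x : Ed d, Tendsto (fun n => ENNReal.ofReal (|w n x| ^ pstar d p))
      atTop (𝓝 (ENNReal.ofReal (u x ^ pstar d p))) := by
    intro x
    have h1 : Tendsto (fun n => w n x) atTop (𝓝 (u x)) := trunc_tendsto (u x) (hu0 x)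
    have h2 : Tendsto (fun n => |w n x|) atTop (𝓝 (|u x|)) := h1.abs
    have h3 : Tendsto (fun n => |w n x| ^ pstar d p) atTop (𝓝 (|u x| ^ pstar d p)) :=
      (Real.continuousAt_rpow_const _ _ (Or.inr hps.le)).tendsto.comp h2
    rw [abs_of_nonneg (hu0 x)] at h3
    exact (ENNReal.continuous_ofReal.tendsto _).comp h3
  have hmeas : ∀ n, AEMeasurable (fun x : Ed d => ENNReal.ofReal (|w n x| ^ pstar d p))
      volume := by
    intro n
    have hwcont : Continuous (w n) := by
      have hwd : Differentiable ℝ (w n) := fun x =>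
        (trunc_hasFDerivAt u hud ((n:ℝ)+1) (by positivity) x).differentiableAt
      exact hwd.continuous
    exact (ENNReal.continuous_ofReal.comp
      ((hwcont.abs).rpow_const fun x => Or.inr hps.le)).aemeasurable
  calc ∫⁻ x : Ed d, ENNReal.ofReal (u x ^ pstar d p)
      = ∫⁻ x : Ed d, liminf (fun n => ENNReal.ofReal (|w n x| ^ pstar d p)) atTop := by
        apply lintegral_congr fun x => ((hptwise x).liminf_eq).symm
    _ ≤ liminf (fun n => ∫⁻ x : Ed d, ENNReal.ofReal (|w n x| ^ pstar d p)) atTop :=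
        lintegral_liminf_le' hmeas
    _ ≤ ENNReal.ofReal ((CS * G) ^ pstar d p) := by
        apply liminf_le_of_le
        · exact ⟨0, Eventually.of_forall fun _ => bot_le⟩
        · intro b hb
          obtain ⟨n, hn⟩ := hb.exists
          exact le_trans hn (key n)


end Aux

set_option maxHeartbeats 1000000 in
lemma lintegral_interp {α : Type*} [MeasurableSpace α] {μ : Measure α}
    {F : α → ℝ≥0∞} (hF : AEMeasurable F μ) {q r θ : ℝ}
    (hq1 : 1 ≤ q) (hr1 : 1 < r) (hqr : q ≤ r)
    (hθ : θ * (1 - 1/r) = 1 - 1/q) :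
    (∫⁻ x, F x ^ q ∂μ) ^ (1/q) ≤
      (∫⁻ x, F x ∂μ) ^ (1 - θ) * (∫⁻ x, F x ^ r ∂μ) ^ (θ / r) := by
  have hr0 : (0:ℝ) < r := lt_trans one_pos hr1
  have hrfrac : (0:ℝ) < 1 - 1/r := by
    have : 1/r < 1 := by rw [div_lt_one hr0]; exact hr1
    linarith
  have hq0 : (0:ℝ) < q := lt_of_lt_of_le one_pos hq1
  rcases eq_or_lt_of_le hq1 with hq_eq | hq_gt
  · -- q = 1
    have hθ0 : θ = 0 := by
      have : θ * (1 - 1/r) = 0 := by rw [hθ, ← hq_eq]; norm_num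
      exact (mul_eq_zero.mp this).resolve_right (by linarith)
    subst hθ0
    simp only [← hq_eq, ENNReal.rpow_one, zero_div, ENNReal.rpow_zero, mul_one, sub_zero]
    simp
  rcases eq_or_lt_of_le hqr with hqr_eq | hqr_lt
  · -- q = r
    have hθ1 : θ = 1 := by
      rw [hqr_eq] at hθ
      exact mul_right_cancel₀ hrfrac.ne' (by linarith : θ * (1 - 1/r) = 1 * (1 - 1/r))
    subst hθ1
    rw [hqr_eq]
    simp [ENNReal.rpow_zero, one_div]
  · -- 1 < q < r
    have hθpos : 0 < θ := by
      have h1 : 0 < 1 - 1/q := by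
        have : 1/q < 1 := by rw [div_lt_one hq0]; exact hq_gt
        linarith
      nlinarith
    have hθlt1 : θ < 1 := by
      have h2 : 1 - 1/q < 1 - 1/r := by
        have : 1/r < 1/q := by apply div_lt_div_of_pos_left one_pos hq0 hqr_lt
        linarith
      nlinarith
    set a : ℝ := q * (1 - θ) with ha
    have ha_pos : 0 < a := mul_pos hq0 (by linarith)
    have hb_pos : 0 < q - a := by
      have : q - a = q * θ := by ring
      rw [this]; positivity
    have ha_lt1 : a < 1 := by
      -- q(1-θ) < 1 ⇔ qθ > q - 1 ; θ(1-1/r) = 1-1/q so qθ = (q-1)/(1-1/r) > q-1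
      have hqθ : q * θ * (1 - 1/r) = q - 1 := by
        have := hθ
        field_simp at this ⊢
        nlinarith [this]
      have : q * θ > q - 1 := by
        nlinarith [mul_pos (mul_pos hq0 hθpos) (by positivity : (0:ℝ) < 1/r)]
      simp only [ha]; nlinarith
    have hqθ : q * θ * (1 - 1/r) = q - 1 := by
      have := hθ
      field_simp at this ⊢
      nlinarith [this]
    have h2 : q * θ * (1/r) = 1 - a := by rw [ha]; nlinarith [hqθ]
    have hmain : q * θ = r * (1 - a) := by
      have : r * (q * θ * (1/r)) = r * (1 - a) := by rw [h2]
      rw [← this]; field_simp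
    have h1a_pos : (0:ℝ) < 1 - a := by nlinarith [mul_pos hq0 hθpos]
    set s : ℝ := 1/a with hs
    set t : ℝ := 1/(1-a) with hts
    have hst : Real.HolderConjugate s t := by
      rw [Real.holderConjugate_iff]
      constructor
      · rw [hs]; rw [lt_div_iff₀ ha_pos]; linarith
      · rw [hs, hts]; field_simp; ring
    have hmul : ∀ x, F x ^ a * F x ^ (q - a) = F x ^ q := by
      intro x
      rw [← ENNReal.rpow_add_of_nonneg _ _ ha_pos.le hb_pos.le]
      ring_nf
    have key : ∫⁻ x, F x ^ q ∂μ ≤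
        (∫⁻ x, (F x ^ a) ^ s ∂μ) ^ (1/s) * (∫⁻ x, (F x ^ (q-a)) ^ t ∂μ) ^ (1/t) := by
      have k := ENNReal.lintegral_mul_le_Lp_mul_Lq μ hst
        (hF.pow_const a) (hF.pow_const (q - a))
      simp only [Pi.mul_apply] at k
      calc ∫⁻ x, F x ^ q ∂μ = ∫⁻ x, F x ^ a * F x ^ (q-a) ∂μ :=
            lintegral_congr fun x => (hmul x).symm
        _ ≤ _ := k
    have hfs : ∀ x, (F x ^ a) ^ s = F x := by
      intro x
      rw [← ENNReal.rpow_mul]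
      rw [show a * s = 1 by rw [hs]; field_simp]
      exact ENNReal.rpow_one _
    have hgt : ∀ x, (F x ^ (q-a)) ^ t = F x ^ r := by
      intro x
      rw [← ENNReal.rpow_mul]
      congr 1
      rw [hts, show q - a = q*θ by ring]
      field_simp [h1a_pos.ne']
      nlinarith [hmain]
    simp_rw [hfs, hgt] at key
    have key2 := ENNReal.rpow_le_rpow key (by positivity : (0:ℝ) ≤ 1/q)
    rw [ENNReal.mul_rpow_of_nonneg _ _ (by positivity : (0:ℝ) ≤ 1/q)] at key2
    rw [← ENNReal.rpow_mul, ← ENNReal.rpow_mul] at key2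
    convert key2 using 3
    · rw [hs]
      simp only [one_div, inv_inv]
      rw [ha]
      field_simp
    · rw [hts]
      simp only [one_div, inv_inv]
      rw [div_eq_iff hr0.ne', eq_comm]
      field_simp [hq0.ne']
      nlinarith [hmain]


lemma final_algebra {CS G N P' θ pst p : ℝ} (hCS : 0 < CS) (hG : 0 ≤ G) (hN : 0 ≤ N)
    (hP' : 0 < P') (hpst : 0 < pst) (hp : 0 < p) :
    N ^ (1-θ) * ((CS*G) ^ pst) ^ (θ / (pst / P')) =
      (P'⁻¹ * CS) ^ (θ * P') * N ^ (1-θ) * ((P' ^ p * G ^ p) ^ (θ * P' / p)) := by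
  have e1 : θ / (pst / P') = θ * P' / pst := by
    rw [div_div_eq_mul_div]
  rw [e1]
  have h1 : ((CS*G) ^ pst) ^ (θ * P' / pst) = CS ^ (θ * P') * G ^ (θ * P') := by
    rw [← Real.rpow_mul (by positivity)]
    rw [show pst * (θ * P' / pst) = θ * P' by field_simp]
    exact Real.mul_rpow hCS.le hG
  have h2 : (P' ^ p * G ^ p) ^ (θ * P' / p)
      = P' ^ (θ * P') * G ^ (θ * P') := by
    rw [Real.mul_rpow (Real.rpow_nonneg hP'.le _) (Real.rpow_nonneg hG _),
      ← Real.rpow_mul hP'.le, ← Real.rpow_mul hG]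
    rw [show p * (θ * P' / p) = θ * P' by field_simp]
  have h3 : (P'⁻¹ * CS) ^ (θ * P') = (P' ^ (θ * P'))⁻¹ * CS ^ (θ * P') := by
    rw [Real.mul_rpow (by positivity) hCS.le, Real.inv_rpow hP'.le]
  rw [h1, h2, h3]
  have hPne : P' ^ (θ * P') ≠ 0 := by positivity
  field_simp


set_option maxHeartbeats 1600000 in
/-- the Gagliardo–Nirenberg type interpolation inequality
`‖ρ‖_{L^q} ≤ ((p')⁻¹ C_S)^{r'p'/q'} ‖ρ‖_{L^1}^{1-r'/q'} I_p(ρ)^{r'p'/(q'p)}`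
for `q ∈ [1, r]`, `r = p*/p'`, deduced from the Sobolev inequality with constant `C_S`. -/
theorem statement1 (d : ℕ) (p CS q : ℝ) (hd : 2 ≤ d)
    (hp1 : 2 * (d : ℝ) / ((d : ℝ) + 1) < p) (hp2 : p < 3 * (d : ℝ) / ((d : ℝ) + 1))
    (hCS : 0 < CS)
    (hSob : ∀ u : Ed d → ℝ, MemW1p p u →
      LqNorm (pstar d p) u ≤ CS * LqNorm p fun x => ‖gradient u x‖)
    (hq1 : 1 ≤ q) (hq2 : q ≤ pstar d p / pconj p)
    (ρ : Ed d → ℝ) (hρ0 : ∀ x, 0 ≤ ρ x) (hρ1 : Integrable ρ)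
    (hW : MemW1p p fun x => ρ x ^ ((p - 1) / p)) :
    LqNorm q ρ ≤
      ((pconj p)⁻¹ * CS) ^
          (pconj (pstar d p / pconj p) * pconj p / pconj q) *
        (∫ x : Ed d, ρ x) ^ (1 - pconj (pstar d p / pconj p) / pconj q) *
        fisherInfo p ρ ^ (pconj (pstar d p / pconj p) * pconj p / (pconj q * p)) := by
  -- numeric facts
  have hd2 : (2:ℝ) ≤ (d:ℝ) := by exact_mod_cast hd
  have hdpos : (0:ℝ) < (d:ℝ) := by linarith
  have hpgt1 : 1 < p := by
    have h : (1:ℝ) < 2 * (d:ℝ) / ((d:ℝ)+1) := by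
      rw [lt_div_iff₀ (by linarith)]; linarith
    linarith
  have hp0 : (0:ℝ) < p := by linarith
  have hpd : p < (d:ℝ) := by
    have h : 3 * (d:ℝ) / ((d:ℝ)+1) ≤ (d:ℝ) := by
      rw [div_le_iff₀ (by linarith)]; nlinarith
    linarith
  have hdp : (0:ℝ) < (d:ℝ) - p := by linarith
  have hps : 0 < pstar d p := by
    unfold pstar; exact div_pos (by positivity) hdp
  have hpps : p ≤ pstar d p := by
    unfold pstar
    rw [le_div_iff₀ hdp]; nlinarith [sq_nonneg p]
  have hp'pos : 0 < pconj p := by unfold pconj; exact div_pos hp0 (by linarith)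
  set pst : ℝ := pstar d p with hpstdef
  set p' : ℝ := pconj p with hp'def
  set r : ℝ := pst / p' with hrdef
  have hrval : r = (d:ℝ) * (p - 1) / ((d:ℝ) - p) := by
    rw [hrdef, hpstdef, hp'def]; unfold pstar pconj
    field_simp
  have hr1 : 1 < r := by
    rw [hrval, lt_div_iff₀ hdp]
    -- d - p < d(p-1)  ⇔  2d < p(d+1)
    have := (div_lt_iff₀ (by linarith : (0:ℝ) < (d:ℝ)+1)).mp hp1
    nlinarith
  have hr0 : (0:ℝ) < r := by linarith
  have hqr : q ≤ r := hq2
  have hq0 : (0:ℝ) < q := by linarith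
  set θ : ℝ := pconj r / pconj q with hθdef
  have hθeq : θ * (1 - 1/r) = 1 - 1/q := by
    rcases eq_or_lt_of_le hq1 with h1 | h1
    · have : pconj q = 0 := by rw [← h1]; unfold pconj; norm_num
      rw [hθdef, this, div_zero, zero_mul, ← h1]
      norm_num
    · rw [hθdef]; unfold pconj
      have hq1' : q - 1 ≠ 0 := by linarith
      have hr1' : r - 1 ≠ 0 := by linarith
      field_simp
  have hθ0 : 0 ≤ θ := by
    rw [hθdef]
    apply div_nonneg <;> unfold pconj <;>
      [exact div_nonneg (by linarith) (by linarith);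
       exact div_nonneg (by linarith) (by linarith)]
  have hθ1 : θ ≤ 1 := by
    have h1 : 1 - 1/q ≤ 1 - 1/r := by
      have : 1/r ≤ 1/q := one_div_le_one_div_of_le hq0 hqr
      linarith
    have h2 : (0:ℝ) < 1 - 1/r := by
      have : 1/r < 1 := by rw [div_lt_one hr0]; exact hr1
      linarith
    nlinarith [hθeq]
  -- main objects
  set u : Ed d → ℝ := fun x => ρ x ^ ((p - 1) / p) with hudef
  have hu0 : ∀ x, 0 ≤ u x := fun x => Real.rpow_nonneg (hρ0 x) _
  set G : ℝ := LqNorm p fun x => ‖gradient u x‖ with hGdef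
  have hG0 : 0 ≤ G := LqNorm_nonneg _ _
  set F : Ed d → ℝ≥0∞ := fun x => ENNReal.ofReal (ρ x) with hFdef
  have hFmeas : AEMeasurable F volume :=
    ENNReal.measurable_ofReal.comp_aemeasurable hρ1.aestronglyMeasurable.aemeasurable
  -- pointwise identity ρ^r = u^{pst}
  have hupst : ∀ x, ρ x ^ r = u x ^ pst := by
    intro x
    rw [hudef, ← Real.rpow_mul (hρ0 x)]
    congr 1
    rw [hrdef, hp'def]; unfold pconj
    field_simp
  -- step 1 : B bound
  have hB : ∫⁻ x : Ed d, F x ^ r ≤ ENNReal.ofReal ((CS * G) ^ pst) := by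
    have : ∀ x : Ed d, F x ^ r = ENNReal.ofReal (u x ^ pst) := by
      intro x
      show ENNReal.ofReal (ρ x) ^ r = _
      rw [ENNReal.ofReal_rpow_of_nonneg (hρ0 x) hr0.le, hupst x]
    rw [lintegral_congr this]
    exact sobolev_B hpgt1 hps hpps hCS hSob u hu0 hW
  -- step 2 : A value
  have hA : ∫⁻ x : Ed d, F x = ENNReal.ofReal (∫ x : Ed d, ρ x) :=
    (MeasureTheory.ofReal_integral_eq_lintegral_ofReal hρ1
      (Eventually.of_forall hρ0)).symm
  -- step 3 : interpolation
  have hinterp := lintegral_interp hFmeas hq1 hr1 hqr hθeq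
  -- step 4 : combine in ENNReal
  have hcomb : (∫⁻ x : Ed d, F x ^ q) ^ (1/q) ≤
      (ENNReal.ofReal (∫ x : Ed d, ρ x)) ^ (1 - θ) *
        (ENNReal.ofReal ((CS * G) ^ pst)) ^ (θ / r) := by
    refine le_trans hinterp ?_
    rw [hA]
    exact mul_le_mul_right (ENNReal.rpow_le_rpow hB (by positivity)) _
  -- step 5 : LHS conversion
  have hLHS : LqNorm q ρ = ((∫⁻ x : Ed d, F x ^ q) ^ (1/q)).toReal := by
    unfold LqNorm
    rw [integral_eq_lintegral_of_nonneg_ae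
      (Eventually.of_forall fun x => Real.rpow_nonneg (abs_nonneg _) _)
      (((continuous_abs.measurable.comp_aemeasurable hρ1.aemeasurable).pow_const q).aestronglyMeasurable)]
    rw [← ENNReal.toReal_rpow]
    congr 2
    apply lintegral_congr fun x => ?_
    show ENNReal.ofReal (|ρ x| ^ q) = ENNReal.ofReal (ρ x) ^ q
    rw [abs_of_nonneg (hρ0 x), ENNReal.ofReal_rpow_of_nonneg (hρ0 x) hq0.le]
  -- step 6 : toReal
  have hRne : (ENNReal.ofReal (∫ x : Ed d, ρ x)) ^ (1 - θ) *
      (ENNReal.ofReal ((CS * G) ^ pst)) ^ (θ / r) ≠ ⊤ :=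
    ENNReal.mul_ne_top
      (ENNReal.rpow_ne_top_of_nonneg (by linarith) ENNReal.ofReal_ne_top)
      (ENNReal.rpow_ne_top_of_nonneg (by positivity) ENNReal.ofReal_ne_top)
  have hmain : LqNorm q ρ ≤
      (∫ x : Ed d, ρ x) ^ (1 - θ) * ((CS * G) ^ pst) ^ (θ / r) := by
    rw [hLHS]
    refine le_trans (ENNReal.toReal_mono hRne hcomb) ?_
    rw [ENNReal.toReal_mul, ← ENNReal.toReal_rpow, ← ENNReal.toReal_rpow,
      ENNReal.toReal_ofReal (integral_nonneg hρ0),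
      ENNReal.toReal_ofReal (by positivity)]
  -- step 7 : final algebra
  refine le_trans hmain (le_of_eq ?_)
  have hGp : G ^ p = ∫ x : Ed d, ‖gradient u x‖ ^ p := by
    rw [hGdef]; unfold LqNorm
    rw [one_div, Real.rpow_inv_rpow (integral_nonneg fun x =>
      Real.rpow_nonneg (abs_nonneg _) _) hp0.ne']
    exact integral_congr_ae (Eventually.of_forall fun x => by simp)
  have hfisher : fisherInfo p ρ = p' ^ p * G ^ p := by
    unfold fisherInfo
    rw [hGp, hp'def, hudef]
  have hexp1 : pconj r * pconj p / pconj q = θ * p' := by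
    rw [hθdef, hp'def, div_mul_eq_mul_div]
  have hexp2 : pconj r * pconj p / (pconj q * p) = θ * p' / p := by
    rw [← hexp1, div_div]
  rw [hrdef] at hexp1 hexp2 ⊢
  rw [hp'def] at hexp1 hexp2
  rw [hexp1, hexp2, hfisher]
  rw [hθdef, hrdef, hp'def]
  exact final_algebra hCS hG0 (integral_nonneg hρ0) hp'pos hps hp0
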